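/- (Theorem 1) Let U satisfy regularity condition R1 or R2, and let μ* be a minimizer of the convex problem min_{μ ∈ ℝ^m} 1 − τᵀμ + φ(μ) + λᵀ|μ|. If a classification rule h^U ∈ T(X,Y) satisfies h^U(y|x) ≥ Φ(x,y)ᵀμ* − φ(μ*) for all x ∈ X and y ∈ Y, then h^U is a 0-1 minimax risk classifier for U, i.e., sup_{p ∈ U} ℓ(h^U,p) = inf_{h ∈ T(X,Y)} sup_{p ∈ U} ℓ(h,p). In addition, the minimax risk equals inf_{h ∈ T(X,Y)} sup_{p ∈ U} ℓ(h,p) = 1 − τᵀμ* + φ(μ*) + λᵀ|μ*|. -/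

import Mathlib

open MeasureTheory

noncomputable section

/-- A (randomized) classification rule. -/
def IsRule {d K : ℕ} (Xs : Set (Fin d → ℝ)) (h : ↥Xs → Fin K → ℝ) : Prop :=
  (∀ x y, 0 ≤ h x y) ∧ (∀ x, ∑ y, h x y = 1) ∧ ∀ y, Measurable fun x => h x y

/-- Expected 0-1 loss. -/
def loss {d K : ℕ} {Xs : Set (Fin d → ℝ)} (h : ↥Xs → Fin K → ℝ)
    (p : Measure (↥Xs × Fin K)) : ℝ :=
  ∫ z, (1 - h z.1 z.2) ∂p

/-- Uncertainty set. -/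
def Unc {d K m : ℕ} {Xs : Set (Fin d → ℝ)} (Φ : ↥Xs × Fin K → Fin m → ℝ)
    (τ lam : Fin m → ℝ) : Set (Measure (↥Xs × Fin K)) :=
  {p | IsProbabilityMeasure p ∧ ∀ i, |(∫ z, Φ z i ∂p) - τ i| ≤ lam i}

/-- `φ(μ) = sup_{x ∈ X, ∅ ≠ C ⊆ Y} ((∑_{y∈C} Φ(x,y)ᵀμ) - 1)/|C|`. -/
def phi {d K m : ℕ} {Xs : Set (Fin d → ℝ)} (Φ : ↥Xs × Fin K → Fin m → ℝ)
    (μ : Fin m → ℝ) : ℝ :=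
  ⨆ (x : ↥Xs) (C : {C : Finset (Fin K) // C.Nonempty}),
    ((∑ y ∈ C.1, ∑ i, Φ (x, y) i * μ i) - 1) / (C.1.card : ℝ)

/-- Regularity condition R1. -/
def CondR1 {d K m : ℕ} (Xs : Set (Fin d → ℝ)) (Φ : ↥Xs × Fin K → Fin m → ℝ)
    (τ lam : Fin m → ℝ) : Prop :=
  Xs.Finite ∧ (Unc Φ τ lam).Nonempty

/-- Regularity condition R2. -/
def CondR2 {d K m : ℕ} (Xs : Set (Fin d → ℝ)) (Φ : ↥Xs × Fin K → Fin m → ℝ)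
    (τ lam : Fin m → ℝ) : Prop :=
  ∃ p ∈ Unc Φ τ lam,
    (∀ i, 0 < lam i → |(∫ z, Φ z i ∂p) - τ i| < lam i) ∧
    ((∀ i, 0 < lam i) ∨
      ∀ W : AffineSubspace ℝ (Fin m → ℝ), (W : Set (Fin m → ℝ)) ≠ Set.univ →
        ¬ (∀ᵐ z ∂p, Φ z ∈ (W : Set (Fin m → ℝ))))

/-- The minimax risk `inf_{h ∈ T(X,Y)} sup_{p ∈ U} ℓ(h,p)`. -/
def minimaxRisk {d K m : ℕ} (Xs : Set (Fin d → ℝ)) (Φ : ↥Xs × Fin K → Fin m → ℝ)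
    (τ lam : Fin m → ℝ) : ℝ :=
  sInf {r : ℝ | ∃ h : ↥Xs → Fin K → ℝ, IsRule Xs h ∧
    r = sSup ((fun p => loss h p) '' Unc Φ τ lam)}

namespace MRC

variable {d K m : ℕ} {Xs : Set (Fin d → ℝ)}

/-- atom corresponding to instance `x` and set `C`: (average of features, 1/|C|). -/
def atomPt (Φ : ↥Xs × Fin K → Fin m → ℝ) (x : ↥Xs) (C : Finset (Fin K)) :
    (Fin m → ℝ) × ℝ :=
  (fun i => (∑ y ∈ C, Φ (x, y) i) / C.card, 1 / C.card)

def AtomSet (Φ : ↥Xs × Fin K → Fin m → ℝ) : Set ((Fin m → ℝ) × ℝ) :=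
  {a | ∃ x C, C.Nonempty ∧ a = atomPt Φ x C}

lemma term_eq (Φ : ↥Xs × Fin K → Fin m → ℝ) (μ : Fin m → ℝ) (x : ↥Xs)
    (C : Finset (Fin K)) (hC : C.Nonempty) :
    ((∑ y ∈ C, ∑ i, Φ (x, y) i * μ i) - 1) / (C.card : ℝ)
      = (∑ i, (atomPt Φ x C).1 i * μ i) - (atomPt Φ x C).2 := by
  have hc : (0:ℝ) < (C.card : ℝ) := by
    exact_mod_cast Finset.card_pos.mpr hC
  simp only [atomPt]
  rw [sub_div]
  congr 1
  rw [Finset.sum_comm, Finset.sum_div]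
  exact Finset.sum_congr rfl fun i _ => by rw [div_mul_eq_mul_div, Finset.sum_mul]

lemma phi_le (hK : 0 < K) [Nonempty ↥Xs] (Φ : ↥Xs × Fin K → Fin m → ℝ)
    {μ : Fin m → ℝ} {r : ℝ}
    (h : ∀ a ∈ AtomSet Φ, (∑ i, a.1 i * μ i) - a.2 ≤ r) : phi Φ μ ≤ r := by
  have : Nonempty {C : Finset (Fin K) // C.Nonempty} :=
    ⟨⟨{⟨0, hK⟩}, Finset.singleton_nonempty _⟩⟩
  refine ciSup_le fun x => ciSup_le fun C => ?_
  rw [term_eq Φ μ x C.1 C.2]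
  exact h _ ⟨x, C.1, C.2, rfl⟩

lemma measurable_ruleFun (h : ↥Xs → Fin K → ℝ) (hmeas : ∀ y, Measurable fun x => h x y) :
    Measurable fun z : ↥Xs × Fin K => h z.1 z.2 := by
  have heq : (fun z : ↥Xs × Fin K => h z.1 z.2)
      = fun z => ∑ y, if z.2 = y then h z.1 y else 0 := by
    funext z
    rw [Finset.sum_ite_eq]
    simp
  rw [heq]
  refine Finset.measurable_sum _ fun y _ => Measurable.ite ?_ ((hmeas y).comp measurable_fst)
    measurable_const
  exact measurable_snd (measurableSet_singleton y)

lemma integrable_of_bounded {α : Type*} [MeasurableSpace α] (p : Measure α) [IsFiniteMeasure p]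
    {f : α → ℝ} (hf : Measurable f) {C : ℝ} (hC : ∀ z, |f z| ≤ C) : Integrable f p :=
  (integrable_const C).mono' hf.aestronglyMeasurable
    (Filter.Eventually.of_forall fun z => by simpa using hC z)

lemma rule_le_one (h : ↥Xs → Fin K → ℝ) (hrule : IsRule Xs h) (x : ↥Xs) (y : Fin K) :
    h x y ≤ 1 := by
  have h1 := hrule.2.1 x
  calc h x y ≤ ∑ y', h x y' :=
        Finset.single_le_sum (fun y' _ => hrule.1 x y') (Finset.mem_univ y)
    _ = 1 := h1

lemma loss_eq (h : ↥Xs → Fin K → ℝ) (hrule : IsRule Xs h) (p : Measure (↥Xs × Fin K))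
    [IsProbabilityMeasure p] : loss h p = 1 - ∫ z, h z.1 z.2 ∂p := by
  have hint : Integrable (fun z : ↥Xs × Fin K => h z.1 z.2) p :=
    integrable_of_bounded p (measurable_ruleFun h hrule.2.2)
      (C := 1) (fun z => abs_le.mpr ⟨by linarith [hrule.1 z.1 z.2], rule_le_one h hrule z.1 z.2⟩)
  rw [loss, integral_sub (integrable_const 1) hint, integral_const]
  simp

lemma loss_nonneg (h : ↥Xs → Fin K → ℝ) (hrule : IsRule Xs h) (p : Measure (↥Xs × Fin K))
    [IsProbabilityMeasure p] : 0 ≤ loss h p :=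
  integral_nonneg fun z => by simp only [Pi.zero_apply]; linarith [rule_le_one h hrule z.1 z.2]

lemma loss_le_one (h : ↥Xs → Fin K → ℝ) (hrule : IsRule Xs h) (p : Measure (↥Xs × Fin K))
    [IsProbabilityMeasure p] : loss h p ≤ 1 := by
  rw [loss_eq h hrule p]
  have : 0 ≤ ∫ z, h z.1 z.2 ∂p := integral_nonneg fun z => hrule.1 z.1 z.2
  linarith

/-- the easy direction : any rule dominating `Φᵀμ* − φ(μ*)` has loss at most the dual value. -/
lemma loss_le_dual (Φ : ↥Xs × Fin K → Fin m → ℝ) (hΦmeas : ∀ i, Measurable fun z => Φ z i)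
    (B : ℝ) (hΦbdd : ∀ z i, |Φ z i| ≤ B) (τ lam : Fin m → ℝ) (μs : Fin m → ℝ)
    (h : ↥Xs → Fin K → ℝ) (hrule : IsRule Xs h)
    (hge : ∀ (x : ↥Xs) (y : Fin K), (∑ i, Φ (x, y) i * μs i) - phi Φ μs ≤ h x y)
    (p : Measure (↥Xs × Fin K)) (hp : p ∈ Unc Φ τ lam) :
    loss h p ≤ 1 - (∑ i, τ i * μs i) + phi Φ μs + ∑ i, lam i * |μs i| := by
  obtain ⟨hprob, hmom⟩ := hp
  have hint_h : Integrable (fun z : ↥Xs × Fin K => h z.1 z.2) p :=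
    integrable_of_bounded p (measurable_ruleFun h hrule.2.2)
      (C := 1) (fun z => abs_le.mpr ⟨by linarith [hrule.1 z.1 z.2], rule_le_one h hrule z.1 z.2⟩)
  have hintΦ : ∀ i, Integrable (fun z => Φ z i) p := fun i =>
    integrable_of_bounded p (hΦmeas i) (fun z => hΦbdd z i)
  have hintsum : Integrable (fun z => ∑ i, Φ z i * μs i) p :=
    integrable_finset_sum _ fun i _ => (hintΦ i).mul_const _
  have hle : ∀ z : ↥Xs × Fin K, (∑ i, Φ z i * μs i) - phi Φ μs ≤ h z.1 z.2 := fun z => by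
    simpa using hge z.1 z.2
  have hmono : ∫ z, ((∑ i, Φ z i * μs i) - phi Φ μs) ∂p ≤ ∫ z, h z.1 z.2 ∂p :=
    integral_mono (hintsum.sub (integrable_const _)) hint_h hle
  have hcomp : ∫ z, ((∑ i, Φ z i * μs i) - phi Φ μs) ∂p
      = (∑ i, (∫ z, Φ z i ∂p) * μs i) - phi Φ μs := by
    rw [integral_sub hintsum (integrable_const _), integral_const]
    simp only [probReal_univ, one_smul]
    congr 1
    rw [integral_finset_sum _ fun i _ => (hintΦ i).mul_const _]
    exact Finset.sum_congr rfl fun i _ => integral_mul_const _ _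
  have hper : ∀ i, τ i * μs i - lam i * |μs i| ≤ (∫ z, Φ z i ∂p) * μs i := by
    intro i
    have h1 : |((∫ z, Φ z i ∂p) - τ i) * μs i| ≤ lam i * |μs i| := by
      rw [abs_mul]
      exact mul_le_mul_of_nonneg_right (hmom i) (abs_nonneg _)
    have h2 := neg_abs_le (((∫ z, Φ z i ∂p) - τ i) * μs i)
    nlinarith [h2, h1]
  have hsum : (∑ i, τ i * μs i) - (∑ i, lam i * |μs i|) ≤ ∑ i, (∫ z, Φ z i ∂p) * μs i := by
    rw [← Finset.sum_sub_distrib]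
    exact Finset.sum_le_sum fun i _ => hper i
  have := loss_eq h hrule p
  rw [this]
  have : (∑ i, τ i * μs i) - (∑ i, lam i * |μs i|) - phi Φ μs ≤ ∫ z, h z.1 z.2 ∂p := by
    calc (∑ i, τ i * μs i) - (∑ i, lam i * |μs i|) - phi Φ μs
        ≤ (∑ i, (∫ z, Φ z i ∂p) * μs i) - phi Φ μs := by linarith
      _ = ∫ z, ((∑ i, Φ z i * μs i) - phi Φ μs) ∂p := hcomp.symm
      _ ≤ ∫ z, h z.1 z.2 ∂p := hmono
  linarith

lemma nonempty_of_prob (p : Measure (↥Xs × Fin K)) [IsProbabilityMeasure p] : Nonempty ↥Xs := by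
  by_contra hemp
  have hE : IsEmpty ↥Xs := not_nonempty_iff.mp hemp
  have h0 : (Set.univ : Set (↥Xs × Fin K)) = ∅ := Set.univ_eq_empty_iff.mpr inferInstance
  have h1 : p Set.univ = 1 := measure_univ
  rw [h0, measure_empty] at h1
  exact zero_ne_one h1

lemma lam_nonneg {Φ : ↥Xs × Fin K → Fin m → ℝ} {τ lam : Fin m → ℝ}
    {p : Measure (↥Xs × Fin K)} (hp : p ∈ Unc Φ τ lam) (i : Fin m) : 0 ≤ lam i :=
  le_trans (abs_nonneg _) (hp.2 i)

lemma integrable_phiVec (Φ : ↥Xs × Fin K → Fin m → ℝ) (hΦmeas : ∀ i, Measurable fun z => Φ z i)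
    (B : ℝ) (hΦbdd : ∀ z i, |Φ z i| ≤ B) (p : Measure (↥Xs × Fin K)) [IsProbabilityMeasure p] :
    Integrable Φ p := by
  refine (integrable_const (max B 0)).mono'
    ((measurable_pi_lambda Φ hΦmeas).aestronglyMeasurable) (Filter.Eventually.of_forall fun z => ?_)
  refine pi_norm_le_iff_of_nonneg (le_max_right B 0) |>.mpr fun i => ?_
  rw [Real.norm_eq_abs]
  exact le_max_of_le_left (hΦbdd z i)

lemma integral_phiVec (Φ : ↥Xs × Fin K → Fin m → ℝ) (hΦmeas : ∀ i, Measurable fun z => Φ z i)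
    (B : ℝ) (hΦbdd : ∀ z i, |Φ z i| ≤ B) (p : Measure (↥Xs × Fin K)) [IsProbabilityMeasure p] :
    (∫ z, Φ z ∂p) = fun i => ∫ z, Φ z i ∂p := by
  funext i
  have := (ContinuousLinearMap.proj (R := ℝ) (φ := fun _ : Fin m => ℝ) i).integral_comp_comm
    (integrable_phiVec Φ hΦmeas B hΦbdd p)
  simpa [ContinuousLinearMap.proj_apply] using this.symm

/-- The mean of `Φ` lies in the closed convex hull of the range of `Φ`. -/
lemma mean_mem_range_hull (Φ : ↥Xs × Fin K → Fin m → ℝ)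
    (hΦmeas : ∀ i, Measurable fun z => Φ z i)
    (B : ℝ) (hΦbdd : ∀ z i, |Φ z i| ≤ B) (p : Measure (↥Xs × Fin K)) [IsProbabilityMeasure p] :
    (fun i => ∫ z, Φ z i ∂p) ∈ closure (convexHull ℝ (Set.range Φ)) := by
  rw [← integral_phiVec Φ hΦmeas B hΦbdd p]
  exact (convex_convexHull ℝ _).closure.integral_mem isClosed_closure
    (Filter.Eventually.of_forall fun z =>
      subset_closure (subset_convexHull ℝ _ (Set.mem_range_self z)))
    (integrable_phiVec Φ hΦmeas B hΦbdd p)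

lemma singleton_atom (Φ : ↥Xs × Fin K → Fin m → ℝ) (z : ↥Xs × Fin K) :
    (Φ z, (1:ℝ)) ∈ AtomSet Φ := by
  refine ⟨z.1, {z.2}, Finset.singleton_nonempty _, ?_⟩
  simp [atomPt]

/-- The pair (mean of `Φ`, 1) lies in the closed convex hull of the atoms. -/
lemma mean_atom_mem (Φ : ↥Xs × Fin K → Fin m → ℝ) (hΦmeas : ∀ i, Measurable fun z => Φ z i)
    (B : ℝ) (hΦbdd : ∀ z i, |Φ z i| ≤ B) (p : Measure (↥Xs × Fin K)) [IsProbabilityMeasure p] :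
    ((fun i => ∫ z, Φ z i ∂p), (1:ℝ)) ∈ closure (convexHull ℝ (AtomSet Φ)) := by
  have hint : Integrable (fun z => (Φ z, (1:ℝ))) p :=
    (integrable_phiVec Φ hΦmeas B hΦbdd p).prodMk (integrable_const 1)
  have hmem : (∫ z, (Φ z, (1:ℝ)) ∂p) ∈ closure (convexHull ℝ (AtomSet Φ)) :=
    (convex_convexHull ℝ _).closure.integral_mem isClosed_closure
      (Filter.Eventually.of_forall fun z =>
        subset_closure (subset_convexHull ℝ _ (singleton_atom Φ z)))
      hint
  have h1 : (∫ z, (Φ z, (1:ℝ)) ∂p) = ((fun i => ∫ z, Φ z i ∂p), (1:ℝ)) := by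
    have hfst := (ContinuousLinearMap.fst ℝ (Fin m → ℝ) ℝ).integral_comp_comm hint
    have hsnd := (ContinuousLinearMap.snd ℝ (Fin m → ℝ) ℝ).integral_comp_comm hint
    refine Prod.ext ?_ ?_
    · simpa [ContinuousLinearMap.fst, integral_phiVec Φ hΦmeas B hΦbdd p] using hfst.symm
    · simpa [ContinuousLinearMap.snd] using hsnd.symm
  rwa [h1] at hmem

/-- Core duality step via Hahn–Banach separation: if the closed convex hull of the atoms
misses `box × [-2,c]`, then some `μ` certifies dual value at least `c`. -/
lemma separation_step (Φ : ↥Xs × Fin K → Fin m → ℝ) (τ lam : Fin m → ℝ)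
    (hlam : ∀ i, 0 ≤ lam i) (w₀ : Fin m → ℝ)
    (hw₀S : (w₀, (1:ℝ)) ∈ closure (convexHull ℝ (AtomSet Φ)))
    (hw₀box : ∀ i, |w₀ i - τ i| ≤ lam i) (c : ℝ) (hc : -2 ≤ c)
    (hdisj : Disjoint ({w : Fin m → ℝ | ∀ i, |w i - τ i| ≤ lam i} ×ˢ Set.Icc (-2) c)
      (closure (convexHull ℝ (AtomSet Φ)))) :
    ∃ μ : Fin m → ℝ, ∀ a ∈ AtomSet Φ,
      (∑ i, a.1 i * μ i) - a.2 ≤ (∑ i, τ i * μ i) - (∑ i, lam i * |μ i|) - c := by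
  classical
  set S := closure (convexHull ℝ (AtomSet Φ)) with hS
  set box : Set (Fin m → ℝ) := {w | ∀ i, |w i - τ i| ≤ lam i} with hboxdef
  have hbox_eq : box = Set.pi Set.univ (fun i => Set.Icc (τ i - lam i) (τ i + lam i)) := by
    ext w
    simp only [hboxdef, Set.mem_setOf_eq, Set.mem_pi, Set.mem_univ, Set.mem_Icc, forall_const]
    constructor
    · intro hw i
      have := abs_le.mp (hw i)
      constructor <;> linarith [this.1, this.2]
    · intro hw i
      have := hw i
      rw [abs_le]
      constructor <;> linarith [this.1, this.2]
  have hboxc : IsCompact box := by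
    rw [hbox_eq]; exact isCompact_univ_pi fun i => isCompact_Icc
  have hboxconv : Convex ℝ box := by
    rw [hbox_eq]; exact convex_pi fun i _ => convex_Icc _ _
  have hTc : IsCompact (box ×ˢ Set.Icc (-2:ℝ) c) := hboxc.prod isCompact_Icc
  have hTconv : Convex ℝ (box ×ˢ Set.Icc (-2:ℝ) c) := hboxconv.prod (convex_Icc _ _)
  obtain ⟨f, u, v, hfu, huv, hvf⟩ :=
    geometric_hahn_banach_compact_closed hTconv hTc
      ((convex_convexHull ℝ _).closure) isClosed_closure hdisj
  -- decompose f
  have hf : ∀ (w : Fin m → ℝ) (r : ℝ), f (w, r) = f (w, 0) + r * f (0, 1) := by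
    intro w r
    have : ((w, r) : (Fin m → ℝ) × ℝ) = (w, 0) + r • ((0 : Fin m → ℝ), (1:ℝ)) := by
      ext <;> simp
    rw [this, map_add, f.map_smul]; simp
  set sl := f (0, 1) with hsl
  have hw₀box' : w₀ ∈ box := hw₀box
  have hsl_pos : 0 < sl := by
    have h1 : f (w₀, -2) < u := hfu _ ⟨hw₀box', ⟨le_rfl, hc⟩⟩
    have h2 : v < f (w₀, 1) := hvf _ hw₀S
    rw [hf w₀ (-2)] at h1
    rw [hf w₀ 1] at h2
    linarith
  set g : (Fin m → ℝ) →ₗ[ℝ] ℝ := (f.toLinearMap).comp (LinearMap.inl ℝ (Fin m → ℝ) ℝ) with hg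
  have hgapp : ∀ w, g w = f (w, 0) := fun w => rfl
  set μ' : Fin m → ℝ := fun i => g (fun j => if i = j then 1 else 0) with hμ'
  have hlin : ∀ w : Fin m → ℝ, f (w, 0) = ∑ i, w i * μ' i := by
    intro w
    rw [← hgapp, LinearMap.pi_apply_eq_sum_univ g w]
    exact Finset.sum_congr rfl fun i _ => by rw [smul_eq_mul]
  set w' : Fin m → ℝ := fun i => τ i + (if 0 ≤ μ' i then lam i else -(lam i)) with hw'
  have hw'box : w' ∈ box := by
    intro i
    simp only [hw', add_sub_cancel_left]
    split <;> simp [abs_of_nonneg (hlam i), abs_of_nonpos (neg_nonpos.mpr (hlam i)), hlam i]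
  have hw'val : f (w', 0) = (∑ i, τ i * μ' i) + ∑ i, lam i * |μ' i| := by
    rw [hlin, ← Finset.sum_add_distrib]
    refine Finset.sum_congr rfl fun i _ => ?_
    simp only [hw']
    by_cases hpos : 0 ≤ μ' i
    · rw [if_pos hpos, abs_of_nonneg hpos]; ring
    · rw [if_neg hpos, abs_of_neg (lt_of_not_ge hpos)]; ring
  -- key inequality for each atom
  have hkey : ∀ a ∈ AtomSet Φ,
      (∑ i, τ i * μ' i) + (∑ i, lam i * |μ' i|) + c * sl ≤ (∑ i, a.1 i * μ' i) + a.2 * sl := by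
    intro a ha
    have haS : a ∈ S := subset_closure (subset_convexHull ℝ _ ha)
    have h1 : f (w', c) < u := hfu _ ⟨hw'box, ⟨hc, le_rfl⟩⟩
    have h2 : v < f a := hvf _ haS
    have h3 : f a = f (a.1, a.2) := by rw [Prod.mk.eta]
    rw [hf w' c, hw'val] at h1
    rw [h3, hf a.1 a.2, hlin] at h2
    nlinarith [h1, h2, huv]
  refine ⟨fun i => -(μ' i) / sl, fun a ha => ?_⟩
  have expand : ∀ x : Fin m → ℝ, (∑ i, x i * (-(μ' i) / sl)) = -(∑ i, x i * μ' i) / sl := by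
    intro x
    rw [eq_div_iff hsl_pos.ne', Finset.sum_mul, ← Finset.sum_neg_distrib]
    refine Finset.sum_congr rfl fun i _ => ?_
    field_simp
  have habs : (∑ i, lam i * |(-(μ' i) / sl)|) = (∑ i, lam i * |μ' i|) / sl := by
    rw [eq_div_iff hsl_pos.ne', Finset.sum_mul]
    refine Finset.sum_congr rfl fun i _ => ?_
    rw [abs_div, abs_neg, abs_of_pos hsl_pos]
    field_simp
  rw [expand, expand, habs]
  have h2 : (-(∑ i, a.1 i * μ' i) - a.2 * sl) / sl
      ≤ (-(∑ i, τ i * μ' i) - (∑ i, lam i * |μ' i|) - c * sl) / sl := by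
    apply (div_le_div_iff_of_pos_right hsl_pos).mpr
    linarith [hkey a ha]
  have e1 : -(∑ i, a.1 i * μ' i) / sl - a.2 = (-(∑ i, a.1 i * μ' i) - a.2 * sl) / sl := by
    field_simp
  have e2 : -(∑ i, τ i * μ' i) / sl - (∑ i, lam i * |μ' i|) / sl - c
      = (-(∑ i, τ i * μ' i) - (∑ i, lam i * |μ' i|) - c * sl) / sl := by
    field_simp
  rw [e1, e2]
  exact h2

/-- Integral against a finite nonneg combination of Dirac measures. -/
lemma integral_dirac_comb {ι : Type} (s : Finset ι) (cf : ι → ℝ) (hcf : ∀ j ∈ s, 0 ≤ cf j)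
    (pt : ι → ↥Xs × Fin K) {f : ↥Xs × Fin K → ℝ} (hf : Measurable f) {Cb : ℝ}
    (hb : ∀ z, |f z| ≤ Cb) :
    ∫ z, f z ∂(∑ j ∈ s, ENNReal.ofReal (cf j) • Measure.dirac (pt j))
      = ∑ j ∈ s, cf j * f (pt j) := by
  have hint : ∀ j ∈ s, Integrable f (ENNReal.ofReal (cf j) • Measure.dirac (pt j)) := by
    intro j _
    refine Integrable.smul_measure ?_ ENNReal.ofReal_ne_top
    exact integrable_of_bounded _ hf hb
  rw [integral_finset_sum_measure hint]
  refine Finset.sum_congr rfl fun j hj => ?_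
  rw [integral_smul_measure, integral_dirac' f (pt j) hf.stronglyMeasurable,
    ENNReal.toReal_ofReal (hcf j hj), smul_eq_mul]

lemma dirac_comb_mass {ι : Type} (s : Finset ι) (cf : ι → ℝ) (hcf : ∀ j ∈ s, 0 ≤ cf j)
    (pt : ι → ↥Xs × Fin K) :
    (∑ j ∈ s, ENNReal.ofReal (cf j) • Measure.dirac (pt j)) Set.univ
      = ENNReal.ofReal (∑ j ∈ s, cf j) := by
  rw [Measure.finset_sum_apply, ENNReal.ofReal_sum_of_nonneg hcf]
  refine Finset.sum_congr rfl fun j hj => ?_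
  rw [Measure.smul_apply, measure_univ, smul_eq_mul, mul_one]

/-- From a point of the convex hull of the atoms, build a probability measure with the right
moments and with loss at least `1 - t` for every rule. -/
lemma exists_measure_of_hull (hK : 0 < K) [Nonempty ↥Xs] (Φ : ↥Xs × Fin K → Fin m → ℝ)
    (hΦmeas : ∀ i, Measurable fun z => Φ z i) (B : ℝ) (hΦbdd : ∀ z i, |Φ z i| ≤ B)
    {w : Fin m → ℝ} {t : ℝ} (hwt : (w, t) ∈ convexHull ℝ (AtomSet Φ)) :
    ∃ p : Measure (↥Xs × Fin K), IsProbabilityMeasure p ∧ (∀ i, ∫ z, Φ z i ∂p = w i) ∧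
      ∀ h' : ↥Xs → Fin K → ℝ, IsRule Xs h' → 1 - t ≤ loss h' p := by
  classical
  rw [convexHull_eq] at hwt
  obtain ⟨ι, s, α, zf, hα0, hα1, hzf, hcm⟩ := hwt
  rw [Finset.centerMass_eq_of_sum_1 _ _ hα1] at hcm
  choose! x C hC hz using hzf
  set Q : Finset ((_ : ι) × Fin K) := s.sigma (fun j => C j) with hQ
  set cf : ((_ : ι) × Fin K) → ℝ := fun q => α q.1 / ((C q.1).card : ℝ) with hcf
  set pt : ((_ : ι) × Fin K) → ↥Xs × Fin K := fun q => (x q.1, q.2) with hpt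
  have hcf0 : ∀ q ∈ Q, 0 ≤ cf q := by
    rintro ⟨j, y⟩ hq
    obtain ⟨hjs, _⟩ := Finset.mem_sigma.mp hq
    exact div_nonneg (hα0 j hjs) (Nat.cast_nonneg _)
  have hcard : ∀ j ∈ s, (0:ℝ) < ((C j).card : ℝ) := fun j hj => by
    exact_mod_cast Finset.card_pos.mpr (hC j hj)
  set p : Measure (↥Xs × Fin K) := ∑ q ∈ Q, ENNReal.ofReal (cf q) • Measure.dirac (pt q)
    with hpdef
  have hsum1 : ∑ q ∈ Q, cf q = 1 := by
    rw [hQ, Finset.sum_sigma, ← hα1]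
    refine Finset.sum_congr rfl fun j hj => ?_
    simp only [hcf]
    rw [Finset.sum_const, nsmul_eq_mul, mul_comm, div_mul_cancel₀ _ (hcard j hj).ne']
  have hprob : IsProbabilityMeasure p :=
    ⟨by rw [hpdef, dirac_comb_mass Q cf hcf0 pt, hsum1, ENNReal.ofReal_one]⟩
  -- the two coordinates of the center of mass
  have hwcoord : ∀ i, w i = ∑ j ∈ s, α j * (zf j).1 i := by
    intro i
    have h1 : (∑ j ∈ s, α j • zf j).1 = w := by rw [hcm]
    rw [Prod.fst_sum] at h1
    have h2 := congrFun h1.symm i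
    rw [Finset.sum_apply] at h2
    rw [h2]
    exact Finset.sum_congr rfl fun j hj => by
      simp [Prod.smul_fst, Pi.smul_apply, smul_eq_mul]
  have htcoord : t = ∑ j ∈ s, α j * (zf j).2 := by
    have h1 : (∑ j ∈ s, α j • zf j).2 = t := by rw [hcm]
    rw [Prod.snd_sum] at h1
    rw [← h1]
    exact Finset.sum_congr rfl fun j hj => by simp [Prod.smul_snd, smul_eq_mul]
  refine ⟨p, hprob, ?_, ?_⟩
  · -- moments
    intro i
    rw [hpdef, integral_dirac_comb Q cf hcf0 pt (hΦmeas i) (fun z => hΦbdd z i)]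
    rw [hQ, Finset.sum_sigma, hwcoord i]
    refine Finset.sum_congr rfl fun j hj => ?_
    simp only [hcf, hpt]
    rw [← Finset.mul_sum, hz j hj]
    simp only [atomPt]
    rw [div_mul_eq_mul_div, mul_div_assoc]
  · intro h' hrule'
    have hmeasf : Measurable fun z : ↥Xs × Fin K => 1 - h' z.1 z.2 :=
      measurable_const.sub (measurable_ruleFun h' hrule'.2.2)
    have hbf : ∀ z : ↥Xs × Fin K, |1 - h' z.1 z.2| ≤ 1 := fun z =>
      abs_le.mpr ⟨by linarith [rule_le_one h' hrule' z.1 z.2], by linarith [hrule'.1 z.1 z.2]⟩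
    rw [loss, hpdef, integral_dirac_comb Q cf hcf0 pt hmeasf hbf, hQ, Finset.sum_sigma]
    have hstep : ∀ j ∈ s, α j - α j * (zf j).2
        ≤ ∑ y ∈ C j, cf ⟨j, y⟩ * (1 - h' (pt ⟨j, y⟩).1 (pt ⟨j, y⟩).2) := by
      intro j hj
      have hsumh : ∑ y ∈ C j, h' (x j) y ≤ 1 := by
        rw [← hrule'.2.1 (x j)]
        exact Finset.sum_le_sum_of_subset_of_nonneg (Finset.subset_univ _)
          (fun y _ _ => hrule'.1 _ _)
      have hz2 : (zf j).2 = 1 / ((C j).card : ℝ) := by rw [hz j hj]; rfl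
      have hexp : ∑ y ∈ C j, cf ⟨j, y⟩ * (1 - h' (pt ⟨j, y⟩).1 (pt ⟨j, y⟩).2)
          = α j - (α j / ((C j).card : ℝ)) * ∑ y ∈ C j, h' (x j) y := by
        simp only [hcf, hpt, mul_sub, mul_one]
        rw [Finset.sum_sub_distrib, Finset.sum_const, nsmul_eq_mul, mul_comm,
          div_mul_cancel₀ _ (hcard j hj).ne', ← Finset.mul_sum]
      rw [hexp, hz2]
      have h3 : (α j / ((C j).card : ℝ)) * ∑ y ∈ C j, h' (x j) y
          ≤ (α j / ((C j).card : ℝ)) * 1 :=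
        mul_le_mul_of_nonneg_left hsumh (div_nonneg (hα0 j hj) (Nat.cast_nonneg _))
      have h4 : α j * (1 / ((C j).card : ℝ)) = α j / ((C j).card : ℝ) := by rw [mul_one_div]
      linarith
    calc 1 - t = ∑ j ∈ s, (α j - α j * (zf j).2) := by
          rw [Finset.sum_sub_distrib, hα1, ← htcoord]
      _ ≤ _ := Finset.sum_le_sum hstep
/-- Under the full-dimensionality condition of R2.2, the mean of `Φ` lies in the interior of
the convex hull of the range of `Φ`. -/
lemma mean_mem_interior (Φ : ↥Xs × Fin K → Fin m → ℝ)
    (hΦmeas : ∀ i, Measurable fun z => Φ z i) (B : ℝ) (hΦbdd : ∀ z i, |Φ z i| ≤ B)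
    (p : Measure (↥Xs × Fin K)) [IsProbabilityMeasure p]
    (hfull : ∀ W : AffineSubspace ℝ (Fin m → ℝ), (W : Set (Fin m → ℝ)) ≠ Set.univ →
        ¬ (∀ᵐ z ∂p, Φ z ∈ (W : Set (Fin m → ℝ)))) :
    (fun i => ∫ z, Φ z i ∂p) ∈ interior (convexHull ℝ (Set.range Φ)) := by
  classical
  set Cset := convexHull ℝ (Set.range Φ) with hCset
  set w₀ : Fin m → ℝ := fun i => ∫ z, Φ z i ∂p with hw₀
  have hCconv : Convex ℝ Cset := convex_convexHull ℝ _
  have hw₀cl : w₀ ∈ closure Cset := mean_mem_range_hull Φ hΦmeas B hΦbdd p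
  -- the affine span of the range is everything
  have hspan : affineSpan ℝ (Set.range Φ) = ⊤ := by
    by_contra hne
    have hne' : ((affineSpan ℝ (Set.range Φ) : AffineSubspace ℝ (Fin m → ℝ)) :
        Set (Fin m → ℝ)) ≠ Set.univ := by
      intro hcoe
      exact hne (SetLike.ext' (by rw [hcoe, AffineSubspace.top_coe]))
    exact hfull _ hne' (Filter.Eventually.of_forall fun z => subset_affineSpan ℝ _
      (Set.mem_range_self z))
  have hspanC : affineSpan ℝ Cset = ⊤ := by
    rw [hCset, affineSpan_convexHull]; exact hspan
  obtain ⟨y₀, hy₀⟩ : (interior Cset).Nonempty :=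
    (hCconv.interior_nonempty_iff_affineSpan_eq_top).mpr hspanC
  -- Step 1 : `w₀` lies in the interior of the closure
  have hw₀int : w₀ ∈ interior (closure Cset) := by
    by_contra hnot
    -- supporting functional at w₀
    have hintcl : y₀ ∈ interior (closure Cset) :=
      interior_mono subset_closure hy₀
    obtain ⟨f, hfsep⟩ := geometric_hahn_banach_open_point
      ((hCconv.closure).interior) isOpen_interior hnot
    have hfle : ∀ u ∈ closure Cset, f u ≤ f w₀ := by
      intro u hu
      by_contra hgt
      push_neg at hgt
      have hcombo : ∀ θ : ℝ, 0 < θ → θ < 1 →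
          θ * f y₀ + (1 - θ) * f u < f w₀ := by
        intro θ hθ0 hθ1
        have hmem : θ • y₀ + (1 - θ) • u ∈ interior (closure Cset) :=
          (hCconv.closure).combo_interior_closure_mem_interior hintcl
            (by rwa [closure_closure]) hθ0 (by linarith) (by ring)
        have := hfsep _ hmem
        rwa [map_add, f.map_smul, f.map_smul, smul_eq_mul, smul_eq_mul] at this
      set D := f u - f w₀ with hD
      have hD0 : 0 < D := by simp [hD]; linarith
      rcases le_or_gt (f u - f y₀) 0 with hcase | hcase
      · have := hcombo (1/2) (by norm_num) (by norm_num)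
        nlinarith
      · set θ := min (1/2 : ℝ) (D / (2 * (f u - f y₀))) with hθdef
        have hθ0 : 0 < θ := lt_min (by norm_num) (div_pos hD0 (by linarith))
        have hθ1 : θ < 1 := lt_of_le_of_lt (min_le_left _ _) (by norm_num)
        have hθle : θ ≤ D / (2 * (f u - f y₀)) := min_le_right _ _
        have hkey := hcombo θ hθ0 hθ1
        have hle2 : θ * (f u - f y₀) ≤ D / 2 := by
          calc θ * (f u - f y₀) ≤ (D / (2 * (f u - f y₀))) * (f u - f y₀) :=
                mul_le_mul_of_nonneg_right hθle hcase.le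
            _ = D / 2 := by
                have hne2 : f u - f y₀ ≠ 0 := hcase.ne'
                field_simp
        nlinarith
    -- f is constantly f w₀ on the range, a.e.
    have hfne : f y₀ < f w₀ := hfsep _ hintcl
    have hintΦ : Integrable Φ p := integrable_phiVec Φ hΦmeas B hΦbdd p
    have hfint : ∫ z, f (Φ z) ∂p = f w₀ := by
      rw [f.integral_comp_comm hintΦ, integral_phiVec Φ hΦmeas B hΦbdd p]
    set g : ↥Xs × Fin K → ℝ := fun z => f w₀ - f (Φ z) with hgdef
    have hg0 : 0 ≤ g := fun z => by
      have : Φ z ∈ closure Cset := subset_closure (subset_convexHull ℝ _ (Set.mem_range_self z))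
      simp only [hgdef, Pi.zero_apply]
      linarith [hfle _ this]
    have hgint : Integrable g p := (integrable_const _).sub (f.integrable_comp hintΦ)
    have hgzero : ∫ z, g z ∂p = 0 := by
      rw [hgdef]
      simp only []
      rw [integral_sub (integrable_const _) (f.integrable_comp hintΦ), hfint, integral_const]
      simp
    have hae : ∀ᵐ z ∂p, g z = 0 := (integral_eq_zero_iff_of_nonneg hg0 hgint).mp hgzero
    -- build the proper affine subspace
    set W : AffineSubspace ℝ (Fin m → ℝ) :=
      AffineSubspace.mk' w₀ (LinearMap.ker (f : (Fin m → ℝ) →ₗ[ℝ] ℝ)) with hW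
    have hmemW : ∀ v, v ∈ (W : Set (Fin m → ℝ)) ↔ f v = f w₀ := by
      intro v
      rw [hW, SetLike.mem_coe, AffineSubspace.mem_mk', LinearMap.mem_ker]
      constructor
      · intro hv
        have : f (v - w₀) = 0 := hv
        rw [map_sub] at this
        linarith
      · intro hv
        show f (v - w₀) = 0
        rw [map_sub, hv, sub_self]
    have hWne : (W : Set (Fin m → ℝ)) ≠ Set.univ := by
      intro hcoe
      have : y₀ ∈ (W : Set (Fin m → ℝ)) := by rw [hcoe]; trivial
      rw [hmemW] at this
      linarith
    refine hfull W hWne ?_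
    filter_upwards [hae] with z hz
    rw [hmemW]
    simp only [hgdef] at hz
    linarith
  -- Step 2 : transfer interiority from the closure to the hull itself
  obtain ⟨r, hr0, hball⟩ := Metric.isOpen_iff.mp isOpen_interior w₀ hw₀int
  set ε : ℝ := r / (2 * (‖w₀ - y₀‖ + 1)) with hε
  have hden : (0:ℝ) < 2 * (‖w₀ - y₀‖ + 1) := by positivity
  have hε0 : 0 < ε := div_pos hr0 hden
  set u : Fin m → ℝ := w₀ + ε • (w₀ - y₀) with hu
  have hucl : u ∈ closure Cset := by
    have : u ∈ Metric.ball w₀ r := by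
      rw [Metric.mem_ball, dist_eq_norm]
      have : u - w₀ = ε • (w₀ - y₀) := by rw [hu]; abel
      rw [this, norm_smul, Real.norm_eq_abs, abs_of_pos hε0]
      calc ε * ‖w₀ - y₀‖ ≤ ε * (‖w₀ - y₀‖ + 1) := by nlinarith [norm_nonneg (w₀ - y₀)]
        _ = r / 2 := by
            have h1 : (‖w₀ - y₀‖ + 1) ≠ 0 := by positivity
            rw [hε]
            field_simp
        _ < r := by linarith
    exact interior_subset (hball this)
  have hcoef : (0:ℝ) ≤ 1 / (1 + ε) := by positivity
  have hcoef2 : (0:ℝ) < ε / (1 + ε) := by positivity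
  have hcoefsum : 1 / (1 + ε) + ε / (1 + ε) = 1 := by
    rw [← add_div, div_self (by positivity)]
  have hcombo := hCconv.combo_closure_interior_mem_interior hucl hy₀ hcoef hcoef2 hcoefsum
  have heq : (1 / (1 + ε)) • u + (ε / (1 + ε)) • y₀ = w₀ := by
    funext i
    simp only [hu, Pi.add_apply, Pi.smul_apply, Pi.sub_apply, smul_eq_mul]
    field_simp
    ring
  rwa [heq] at hcombo

lemma pair_one_mem (Φ : ↥Xs × Fin K → Fin m → ℝ) {v : Fin m → ℝ}
    (hv : v ∈ convexHull ℝ (Set.range Φ)) :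
    (v, (1:ℝ)) ∈ convexHull ℝ (AtomSet Φ) := by
  classical
  rw [convexHull_eq] at hv ⊢
  obtain ⟨ι, s, α, zf, hα0, hα1, hzf, hcm⟩ := hv
  rw [Finset.centerMass_eq_of_sum_1 _ _ hα1] at hcm
  refine ⟨ι, s, α, fun j => (zf j, 1), hα0, hα1, ?_, ?_⟩
  · intro j hj
    obtain ⟨z, hz⟩ := hzf j hj
    show (zf j, (1:ℝ)) ∈ AtomSet Φ
    rw [← hz]
    exact singleton_atom Φ z
  · rw [Finset.centerMass_eq_of_sum_1 _ _ hα1]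
    refine Prod.ext ?_ ?_
    · rw [Prod.fst_sum, ← hcm]
      exact Finset.sum_congr rfl fun j hj => rfl
    · rw [Prod.snd_sum]
      simp only [Prod.smul_snd, smul_eq_mul, mul_one]
      exact hα1

lemma coords_of_dist {a b : (Fin m → ℝ) × ℝ} {η : ℝ} (h : dist a b < η) :
    (∀ i, |a.1 i - b.1 i| ≤ η) ∧ |a.2 - b.2| ≤ η := by
  rw [Prod.dist_eq] at h
  have h1 : dist a.1 b.1 < η := lt_of_le_of_lt (le_max_left _ _) h
  have h2 : dist a.2 b.2 < η := lt_of_le_of_lt (le_max_right _ _) h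
  constructor
  · intro i
    have := dist_le_pi_dist a.1 b.1 i
    rw [Real.dist_eq] at this
    linarith
  · rw [Real.dist_eq] at h2
    linarith

/-- Under either regularity condition, an element of the closed hull satisfying the box
constraints can be approximated (in `t`, exactly in the box) by an element of the hull itself. -/
lemma exists_good_hull_point (hK : 0 < K) [Nonempty ↥Xs] (Φ : ↥Xs × Fin K → Fin m → ℝ)
    (hΦmeas : ∀ i, Measurable fun z => Φ z i) (B : ℝ) (hΦbdd : ∀ z i, |Φ z i| ≤ B)
    (τ lam : Fin m → ℝ) (hreg : CondR1 Xs Φ τ lam ∨ CondR2 Xs Φ τ lam)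
    {ws : Fin m → ℝ} {ts : ℝ} (hwt : (ws, ts) ∈ closure (convexHull ℝ (AtomSet Φ)))
    (hbox : ∀ i, |ws i - τ i| ≤ lam i) (hts : -2 ≤ ts) {ε : ℝ} (hε : 0 < ε) :
    ∃ w t, (w, t) ∈ convexHull ℝ (AtomSet Φ) ∧ (∀ i, |w i - τ i| ≤ lam i) ∧ t ≤ ts + ε := by
  classical
  rcases hreg with ⟨hfin, _⟩ | ⟨p, hpU, hstrict, halt⟩
  · -- R1 : finite instance space, hull is closed
    haveI := hfin.to_subtype
    have hAfin : (AtomSet Φ).Finite := by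
      refine Set.Finite.subset (Set.finite_univ.image
        (fun q : ↥Xs × Finset (Fin K) => atomPt Φ q.1 q.2)) ?_
      rintro a ⟨x, C, hC, rfl⟩
      exact ⟨(x, C), Set.mem_univ _, rfl⟩
    have hclosed : closure (convexHull ℝ (AtomSet Φ)) = convexHull ℝ (AtomSet Φ) :=
      ((hAfin.isCompact_convexHull (𝕜 := ℝ)).isClosed).closure_eq
    rw [hclosed] at hwt
    exact ⟨ws, ts, hwt, hbox, by linarith⟩
  · haveI := hpU.1
    set w₀ : Fin m → ℝ := fun i => ∫ z, Φ z i ∂p with hw₀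
    have hw₀box : ∀ i, |w₀ i - τ i| ≤ lam i := hpU.2
    set θ : ℝ := min (1/2) (ε/6) with hθdef
    have hθ0 : 0 < θ := lt_min (by norm_num) (by linarith)
    have hθ1 : θ ≤ 1/2 := min_le_left _ _
    have hθε : θ ≤ ε/6 := min_le_right _ _
    rcases isEmpty_or_nonempty (Fin m) with hm | hm
    · -- no features : box constraints are vacuous
      obtain ⟨q, hq, hqd⟩ := Metric.mem_closure_iff.mp hwt ε hε
      refine ⟨q.1, q.2, by rwa [Prod.mk.eta], fun i => hm.elim i, ?_⟩
      have := (coords_of_dist (by rwa [dist_comm])).2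
      have h2 : |q.2 - ts| ≤ ε := this
      have := abs_le.mp h2
      linarith [this.1, this.2]
    rcases halt with hall | hfull
    · -- R2.1 : all lam positive
      set κ : ℝ := Finset.univ.inf' Finset.univ_nonempty (fun i => lam i - |w₀ i - τ i|)
        with hκdef
      have hκ0 : 0 < κ := by
        rw [hκdef, Finset.lt_inf'_iff]
        intro i _
        have := hstrict i (hall i)
        simp only [hw₀] at this ⊢
        linarith
      have hκle : ∀ i, κ ≤ lam i - |w₀ i - τ i| := fun i =>
        Finset.inf'_le _ (Finset.mem_univ i)
      set δ : ℝ := min (θ * κ) (ε/2) with hδdef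
      have hδ0 : 0 < δ := lt_min (by positivity) (by linarith)
      obtain ⟨dd, hdd, hddist⟩ := Metric.mem_closure_iff.mp hwt δ hδ0
      obtain ⟨s₀, hs₀, hs₀dist⟩ := Metric.mem_closure_iff.mp
        (mean_atom_mem Φ hΦmeas B hΦbdd p) δ hδ0
      have hd1 := coords_of_dist (show dist dd (ws, ts) < δ by rwa [dist_comm])
      have hs1 := coords_of_dist (show dist s₀ (w₀, 1) < δ by rwa [dist_comm])
      dsimp only at hd1 hs1
      set q : (Fin m → ℝ) × ℝ := (1 - θ) • dd + θ • s₀ with hqdef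
      have hqhull : q ∈ convexHull ℝ (AtomSet Φ) :=
        (convex_convexHull ℝ _) hdd hs₀ (by linarith) hθ0.le (by ring)
      refine ⟨q.1, q.2, by rwa [Prod.mk.eta], ?_, ?_⟩
      · intro i
        have hq1 : q.1 i = (1 - θ) * dd.1 i + θ * s₀.1 i := by
          simp [hqdef, Prod.smul_fst, Prod.fst_add, smul_eq_mul]
        have e1 : |dd.1 i - τ i| ≤ δ + lam i := by
          have := hd1.1 i
          have := hbox i
          have h3 := abs_sub_abs_le_abs_sub (dd.1 i - τ i) (ws i - τ i)
          have h4 : dd.1 i - τ i - (ws i - τ i) = dd.1 i - ws i := by ring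
          rw [h4] at h3
          linarith [abs_sub_abs_le_abs_sub (dd.1 i - τ i) (ws i - τ i)]
        have e2 : |s₀.1 i - τ i| ≤ δ + lam i - κ := by
          have h5 := hs1.1 i
          have h3 := abs_sub_abs_le_abs_sub (s₀.1 i - τ i) (w₀ i - τ i)
          have h4 : s₀.1 i - τ i - (w₀ i - τ i) = s₀.1 i - w₀ i := by ring
          rw [h4] at h3
          have := hκle i
          linarith
        have habs : |q.1 i - τ i| ≤ (1 - θ) * |dd.1 i - τ i| + θ * |s₀.1 i - τ i| := by
          rw [hq1]
          have : (1 - θ) * dd.1 i + θ * s₀.1 i - τ i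
              = (1 - θ) * (dd.1 i - τ i) + θ * (s₀.1 i - τ i) := by ring
          rw [this]
          refine le_trans (abs_add_le _ _) ?_
          rw [abs_mul, abs_mul, abs_of_nonneg (by linarith : (0:ℝ) ≤ 1 - θ),
            abs_of_nonneg hθ0.le]
        have hδκ : δ ≤ θ * κ := min_le_left _ _
        calc |q.1 i - τ i| ≤ (1 - θ) * |dd.1 i - τ i| + θ * |s₀.1 i - τ i| := habs
          _ ≤ (1 - θ) * (δ + lam i) + θ * (δ + lam i - κ) := by
              refine add_le_add (mul_le_mul_of_nonneg_left e1 (by linarith))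
                (mul_le_mul_of_nonneg_left e2 hθ0.le)
          _ = lam i + δ - θ * κ := by ring
          _ ≤ lam i := by linarith
      · have hq2 : q.2 = (1 - θ) * dd.2 + θ * s₀.2 := by
          simp [hqdef, Prod.smul_snd, Prod.snd_add, smul_eq_mul]
        have e3 : dd.2 ≤ ts + δ := by
          have := abs_le.mp hd1.2
          linarith [this.1, this.2]
        have e4 : s₀.2 ≤ 1 + δ := by
          have := abs_le.mp hs1.2
          linarith [this.1, this.2]
        have hδε : δ ≤ ε/2 := min_le_right _ _
        rw [hq2]
        nlinarith [hθ0, hθ1, hθε, hts, e3, e4, hδ0, hδε]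
    · -- R2.2 : full-dimensional support
      have hw₀int := mean_mem_interior Φ hΦmeas B hΦbdd p hfull
      obtain ⟨ρ, hρ0, hball⟩ := Metric.isOpen_iff.mp isOpen_interior _ hw₀int
      set η : ℝ := min (θ * ρ / 2) (ε / 2) with hηdef
      have hη0 : 0 < η := lt_min (by positivity) (by linarith)
      obtain ⟨dd, hdd, hddist⟩ := Metric.mem_closure_iff.mp hwt η hη0
      have hd1 := coords_of_dist (show dist dd (ws, ts) < η by rwa [dist_comm])
      dsimp only at hd1
      have hdfst : dist dd.1 ws < η := by
        have : dist dd (ws, ts) < η := by rwa [dist_comm]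
        rw [Prod.dist_eq] at this
        exact lt_of_le_of_lt (le_max_left _ _) this
      set v : Fin m → ℝ := w₀ + ((1 - θ)/θ) • (ws - dd.1) with hvdef
      have hvball : v ∈ Metric.ball w₀ ρ := by
        rw [Metric.mem_ball, dist_eq_norm]
        have : v - w₀ = ((1 - θ)/θ) • (ws - dd.1) := by rw [hvdef]; abel
        rw [this, norm_smul, Real.norm_eq_abs,
          abs_of_nonneg (div_nonneg (by linarith) hθ0.le)]
        have hnrm : ‖ws - dd.1‖ < η := by rwa [← dist_eq_norm, dist_comm]
        have hfrac : (1 - θ)/θ ≤ 1/θ := by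
          apply (div_le_div_iff_of_pos_right hθ0).mpr
          linarith
        have h6 : (1 - θ)/θ * ‖ws - dd.1‖ ≤ (1/θ) * η := by
          refine mul_le_mul hfrac hnrm.le (norm_nonneg _) (by positivity)
        have h7 : (1/θ) * η ≤ (1/θ) * (θ * ρ / 2) :=
          mul_le_mul_of_nonneg_left (min_le_left _ _) (by positivity)
        have h8 : (1/θ) * (θ * ρ / 2) = ρ/2 := by field_simp
        linarith
      have hvC : v ∈ convexHull ℝ (Set.range Φ) := interior_subset (hball hvball)
      have hv1 : (v, (1:ℝ)) ∈ convexHull ℝ (AtomSet Φ) := pair_one_mem Φ hvC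
      set q : (Fin m → ℝ) × ℝ := (1 - θ) • dd + θ • (v, (1:ℝ)) with hqdef
      have hqhull : q ∈ convexHull ℝ (AtomSet Φ) :=
        (convex_convexHull ℝ _) hdd hv1 (by linarith) hθ0.le (by ring)
      refine ⟨q.1, q.2, by rwa [Prod.mk.eta], ?_, ?_⟩
      · intro i
        have hq1 : q.1 i = (1 - θ) * ws i + θ * w₀ i := by
          simp only [hqdef, Prod.fst_add, Prod.smul_fst, Pi.add_apply, Pi.smul_apply,
            smul_eq_mul, hvdef, Pi.sub_apply]
          field_simp
          ring
        rw [hq1]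
        have : (1 - θ) * ws i + θ * w₀ i - τ i
            = (1 - θ) * (ws i - τ i) + θ * (w₀ i - τ i) := by ring
        rw [this]
        refine le_trans (abs_add_le _ _) ?_
        rw [abs_mul, abs_mul, abs_of_nonneg (by linarith : (0:ℝ) ≤ 1 - θ),
          abs_of_nonneg hθ0.le]
        calc (1 - θ) * |ws i - τ i| + θ * |w₀ i - τ i|
            ≤ (1 - θ) * lam i + θ * lam i := add_le_add
              (mul_le_mul_of_nonneg_left (hbox i) (by linarith))
              (mul_le_mul_of_nonneg_left (hw₀box i) hθ0.le)
          _ = lam i := by ring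
      · have hq2 : q.2 = (1 - θ) * dd.2 + θ * 1 := by
          simp [hqdef, Prod.smul_snd, Prod.snd_add, smul_eq_mul]
        have e3 : dd.2 ≤ ts + η := by
          have := abs_le.mp hd1.2
          linarith [this.1, this.2]
        have hηε : η ≤ ε/2 := min_le_right _ _
        rw [hq2]
        nlinarith [hθ0, hθ1, hθε, hts, e3, hη0, hηε]

/-- Strong duality direction: every rule has worst-case loss at least the dual optimal value. -/
lemma exists_loss_ge (hK : 0 < K) (Φ : ↥Xs × Fin K → Fin m → ℝ)
    (hΦmeas : ∀ i, Measurable fun z => Φ z i) (B : ℝ) (hΦbdd : ∀ z i, |Φ z i| ≤ B)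
    (τ lam : Fin m → ℝ) (hreg : CondR1 Xs Φ τ lam ∨ CondR2 Xs Φ τ lam)
    (μs : Fin m → ℝ)
    (hμs : ∀ μ : Fin m → ℝ,
      1 - (∑ i, τ i * μs i) + phi Φ μs + ∑ i, lam i * |μs i| ≤
      1 - (∑ i, τ i * μ i) + phi Φ μ + ∑ i, lam i * |μ i|)
    (h' : ↥Xs → Fin K → ℝ) (hrule' : IsRule Xs h') {ε : ℝ} (hε : 0 < ε) :
    ∃ p ∈ Unc Φ τ lam,
      1 - (∑ i, τ i * μs i) + phi Φ μs + (∑ i, lam i * |μs i|) - ε ≤ loss h' p := by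
  obtain ⟨p₀, hp₀⟩ : ∃ p₀, p₀ ∈ Unc Φ τ lam := by
    rcases hreg with ⟨_, ⟨p₀, hp₀⟩⟩ | ⟨p₀, hp₀, _⟩ <;> exact ⟨p₀, hp₀⟩
  haveI hprob₀ := hp₀.1
  haveI : Nonempty ↥Xs := nonempty_of_prob p₀
  have hlam : ∀ i, 0 ≤ lam i := fun i => lam_nonneg hp₀ i
  set w₀ : Fin m → ℝ := fun i => ∫ z, Φ z i ∂p₀ with hw₀
  have hw₀S : (w₀, (1:ℝ)) ∈ closure (convexHull ℝ (AtomSet Φ)) :=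
    mean_atom_mem Φ hΦmeas B hΦbdd p₀
  have hw₀box : ∀ i, |w₀ i - τ i| ≤ lam i := hp₀.2
  set gs : ℝ := (∑ i, τ i * μs i) - (∑ i, lam i * |μs i|) - phi Φ μs with hgs
  have hphi0 : phi Φ (0 : Fin m → ℝ) ≤ 0 := by
    refine phi_le hK Φ fun a ha => ?_
    obtain ⟨x, C, hC, rfl⟩ := ha
    have : (0:ℝ) ≤ (atomPt Φ x C).2 := by
      simp only [atomPt]
      positivity
    simp only [Pi.zero_apply, mul_zero, Finset.sum_const_zero]
    linarith
  have hgs0 : 0 ≤ gs := by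
    have := hμs 0
    simp only [Pi.zero_apply, mul_zero, Finset.sum_const_zero, abs_zero] at this
    rw [hgs]
    linarith
  set c : ℝ := gs + ε/2 with hc
  by_cases hdis : Disjoint ({w : Fin m → ℝ | ∀ i, |w i - τ i| ≤ lam i} ×ˢ Set.Icc (-2:ℝ) c)
      (closure (convexHull ℝ (AtomSet Φ)))
  · exfalso
    obtain ⟨μ, hμ⟩ := separation_step Φ τ lam hlam w₀ hw₀S hw₀box c (by rw [hc]; linarith) hdis
    have hphiμ : phi Φ μ ≤ (∑ i, τ i * μ i) - (∑ i, lam i * |μ i|) - c := phi_le hK Φ hμ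
    have h2 := hμs μ
    rw [hc, hgs] at hphiμ
    linarith
  · rw [Set.not_disjoint_iff] at hdis
    obtain ⟨q, hqT, hqS⟩ := hdis
    obtain ⟨hq1, hq2⟩ := Set.mem_prod.mp hqT
    obtain ⟨w, t, hwhull, hwbox, htle⟩ := exists_good_hull_point hK Φ hΦmeas B hΦbdd τ lam hreg
      (ws := q.1) (ts := q.2) (by rwa [Prod.mk.eta]) hq1 hq2.1 (ε := ε/2) (by linarith)
    obtain ⟨p, hpprob, hpmom, hploss⟩ := exists_measure_of_hull hK Φ hΦmeas B hΦbdd hwhull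
    refine ⟨p, ⟨hpprob, fun i => by rw [hpmom i]; exact hwbox i⟩, ?_⟩
    have hl := hploss h' hrule'
    have ht2 : t ≤ gs + ε := by
      have h9 : q.2 ≤ c := hq2.2
      rw [hc] at h9
      linarith
    have : 1 - (gs + ε) ≤ loss h' p := by linarith
    rw [hgs] at this
    linarith

end MRC

/-- Theorem 1: a rule dominating `Φᵀμ* − φ(μ*)` for a minimizer `μ*` of the MRC learning
problem is a 0-1 minimax risk classifier, and the minimax risk equals the optimal value. -/
theorem stmt_2 {d K m : ℕ} (hK : 0 < K)
    (Xs : Set (Fin d → ℝ)) (hXs : MeasurableSet Xs)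
    (Φ : ↥Xs × Fin K → Fin m → ℝ) (hΦmeas : ∀ i, Measurable fun z => Φ z i)
    (B : ℝ) (hΦbdd : ∀ z i, |Φ z i| ≤ B)
    (τ lam : Fin m → ℝ)
    (hreg : CondR1 Xs Φ τ lam ∨ CondR2 Xs Φ τ lam)
    (μs : Fin m → ℝ)
    (hμs : ∀ μ : Fin m → ℝ,
      1 - (∑ i, τ i * μs i) + phi Φ μs + ∑ i, lam i * |μs i| ≤
      1 - (∑ i, τ i * μ i) + phi Φ μ + ∑ i, lam i * |μ i|)
    (h : ↥Xs → Fin K → ℝ) (hrule : IsRule Xs h)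
    (hge : ∀ (x : ↥Xs) (y : Fin K), (∑ i, Φ (x, y) i * μs i) - phi Φ μs ≤ h x y) :
    sSup ((fun p => loss h p) '' Unc Φ τ lam) = minimaxRisk Xs Φ τ lam ∧
    minimaxRisk Xs Φ τ lam
      = 1 - (∑ i, τ i * μs i) + phi Φ μs + ∑ i, lam i * |μs i| := by
  classical
  set V : ℝ := 1 - (∑ i, τ i * μs i) + phi Φ μs + ∑ i, lam i * |μs i| with hV
  obtain ⟨p₀, hp₀⟩ : ∃ p₀, p₀ ∈ Unc Φ τ lam := by
    rcases hreg with ⟨_, ⟨p₀, hp₀⟩⟩ | ⟨p₀, hp₀, _⟩ <;> exact ⟨p₀, hp₀⟩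
  haveI := hp₀.1
  -- lower bound for an arbitrary rule
  have key : ∀ h' : ↥Xs → Fin K → ℝ, IsRule Xs h' →
      V ≤ sSup ((fun p => loss h' p) '' Unc Φ τ lam) := by
    intro h' hrule'
    have hub' : ∀ r ∈ (fun p => loss h' p) '' Unc Φ τ lam, r ≤ 1 := by
      rintro r ⟨p, hp, rfl⟩
      haveI := hp.1
      exact MRC.loss_le_one h' hrule' p
    have hbdd : BddAbove ((fun p => loss h' p) '' Unc Φ τ lam) := ⟨1, hub'⟩
    refine le_of_forall_pos_le_add ?_
    intro ε hε
    obtain ⟨p, hp, hlp⟩ := MRC.exists_loss_ge hK Φ hΦmeas B hΦbdd τ lam hreg μs hμs h' hrule' hε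
    have hle := le_csSup hbdd (Set.mem_image_of_mem _ hp)
    rw [hV]
    linarith
  -- upper bound for the given rule
  have hub : ∀ r ∈ (fun p => loss h p) '' Unc Φ τ lam, r ≤ V := by
    rintro r ⟨p, hp, rfl⟩
    haveI := hp.1
    exact MRC.loss_le_dual Φ hΦmeas B hΦbdd τ lam μs h hrule hge p hp
  have hLne : ((fun p => loss h p) '' Unc Φ τ lam).Nonempty := ⟨loss h p₀, p₀, hp₀, rfl⟩
  have hsup_eq : sSup ((fun p => loss h p) '' Unc Φ τ lam) = V :=
    le_antisymm (csSup_le hLne hub) (key h hrule)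
  have hVmem : V ∈ {r : ℝ | ∃ h0 : ↥Xs → Fin K → ℝ, IsRule Xs h0 ∧
      r = sSup ((fun p => loss h0 p) '' Unc Φ τ lam)} := ⟨h, hrule, hsup_eq.symm⟩
  have hlow : ∀ r ∈ {r : ℝ | ∃ h0 : ↥Xs → Fin K → ℝ, IsRule Xs h0 ∧
      r = sSup ((fun p => loss h0 p) '' Unc Φ τ lam)}, V ≤ r := by
    rintro r ⟨h0, hr0, rfl⟩
    exact key h0 hr0
  have hmm : minimaxRisk Xs Φ τ lam = V := by
    rw [minimaxRisk]
    exact le_antisymm (csInf_le ⟨V, fun r hr => hlow r hr⟩ hVmem)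
      (le_csInf ⟨V, hVmem⟩ hlow)
  exact ⟨by rw [hsup_eq, hmm], by rw [hmm]⟩


end
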